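/- There is an absolute constant C > 0 such that the following holds. Let p be a prime, let I = [K+1, K+M] ⊆ [1, p-1] be an interval of M integers, let N be an integer with 1 ≤ N < p, let i ≥ 1 be an integer, let α_m (m ∈ I) be complex numbers, and let γ_x (1 ≤ x ≤ p-1) be complex numbers with |γ_x| ≤ min{N, p/‖x‖_p}. Then |∑_{m∈I} ∑_{x : 1 ≤ x ≤ p-1, e^i p/N < ‖x‖_p ≤ e^{i+1} p/N} α_m γ_x e_p(m x̄)| ≤ C e^{-i/2} ‖α‖₂ N^{1/2} p, where ‖α‖₂ = (∑_{m∈I} |α_m|²)^{1/2}. -/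

import Mathlib

/-- `e_p(z) = exp(2πiz/p)`. -/
noncomputable def ep (p : ℕ) (z : ℤ) : ℂ := Complex.exp (2 * Real.pi * Complex.I * z / p)

/-- the multiplicative inverse of `x` modulo `p`, as a natural number -/
def pinv (p x : ℕ) : ℕ := ((x : ZMod p)⁻¹).val

/-- `‖u‖_p`: the distance from `u` to the nearest multiple of `p` -/
def dp (p : ℕ) (u : ℤ) : ℕ := min (u % p).toNat (p - (u % p).toNat)

lemma ep_add (p : ℕ) (a b : ℤ) : ep p (a + b) = ep p a * ep p b := by
  rw [ep, ep, ep, ← Complex.exp_add]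
  congr 1
  push_cast
  ring

lemma ep_conj (p : ℕ) (a : ℤ) : (starRingEnd ℂ) (ep p a) = ep p (-a) := by
  rw [ep, ep, ← Complex.exp_conj]
  congr 1
  simp only [map_div₀, map_mul, Complex.conj_I, Complex.conj_ofNat]
  push_cast
  simp [Complex.conj_ofReal]

lemma ep_nat_mul (p : ℕ) (m : ℕ) (a : ℤ) : ep p ((m : ℤ) * a) = ep p a ^ m := by
  rw [ep, ep, ← Complex.exp_nat_mul]
  congr 1
  push_cast
  ring

lemma sum_ep (p : ℕ) (hp : 0 < p) (a : ℤ) :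
    ∑ m ∈ Finset.range p, ep p ((m : ℤ) * a) = if (p : ℤ) ∣ a then (p : ℂ) else 0 := by
  have hpc : (p : ℂ) ≠ 0 := Nat.cast_ne_zero.mpr hp.ne'
  simp only [ep_nat_mul]
  by_cases hd : (p : ℤ) ∣ a
  · obtain ⟨k, hk⟩ := hd
    have h1 : ep p a = 1 := by
      rw [ep, hk]
      push_cast
      rw [show (2 * (Real.pi : ℂ) * Complex.I * ((p : ℂ) * (k : ℂ)) / p) =
          (k : ℂ) * (2 * Real.pi * Complex.I) by field_simp]
      exact Complex.exp_int_mul_two_pi_mul_I k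
    rw [if_pos ⟨k, hk⟩]
    simp [h1]
  · have hne : ep p a ≠ 1 := by
      intro h
      rw [ep, Complex.exp_eq_one_iff] at h
      obtain ⟨n, hn⟩ := h
      apply hd
      have h2 : (2 * (Real.pi : ℂ) * Complex.I) ≠ 0 := by
        simp [Real.pi_ne_zero, Complex.I_ne_zero, Complex.ofReal_ne_zero]
      have : (a : ℂ) = (n : ℂ) * p := by
        field_simp at hn
        have := hn
        -- 2 * π * I * a = n * (2 * π * I) * p
        have h3 : (2 * (Real.pi : ℂ) * Complex.I) * a = (2 * (Real.pi : ℂ) * Complex.I) * ((n:ℂ) * p) := by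
          rw [this]; ring
        exact mul_left_cancel₀ h2 h3
      have : a = n * p := by exact_mod_cast this
      exact ⟨n, by linarith⟩
    have hpow : ep p a ^ p = 1 := by
      rw [ep, ← Complex.exp_nat_mul]
      rw [show (p : ℂ) * (2 * Real.pi * Complex.I * a / p) = (a : ℂ) * (2 * Real.pi * Complex.I) by
        field_simp]
      exact Complex.exp_int_mul_two_pi_mul_I a
    rw [geom_sum_eq hne, hpow]
    simp [hd]

lemma pinv_lt (p : ℕ) (hp : 0 < p) (x : ℕ) : pinv p x < p := by
  haveI : NeZero p := ⟨hp.ne'⟩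
  exact ZMod.val_lt _

lemma pinv_inj (p : ℕ) (hp : p.Prime) {x y : ℕ} (hx : x ∈ Finset.Icc 1 (p - 1))
    (hy : y ∈ Finset.Icc 1 (p - 1)) (h : pinv p x = pinv p y) : x = y := by
  haveI : NeZero p := ⟨hp.pos.ne'⟩
  haveI : Fact p.Prime := ⟨hp⟩
  have hp2 := hp.two_le
  simp only [Finset.mem_Icc] at hx hy
  have hxp : x < p := by omega
  have hyp : y < p := by omega
  have h1 : ((x : ZMod p))⁻¹ = ((y : ZMod p))⁻¹ := ZMod.val_injective p h
  have h2 : (x : ZMod p) = y := inv_injective h1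
  have h3 := congrArg ZMod.val h2
  rwa [ZMod.val_cast_of_lt hxp, ZMod.val_cast_of_lt hyp] at h3

lemma pinv_dvd_iff (p : ℕ) (hp : p.Prime) {x y : ℕ} (hx : x ∈ Finset.Icc 1 (p - 1))
    (hy : y ∈ Finset.Icc 1 (p - 1)) :
    (p : ℤ) ∣ ((pinv p x : ℤ) - (pinv p y : ℤ)) ↔ x = y := by
  constructor
  · intro hd
    have h1 := pinv_lt p hp.pos x
    have h2 := pinv_lt p hp.pos y
    have h3 : ((pinv p x : ℤ) - (pinv p y : ℤ)) = 0 :=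
      Int.eq_zero_of_abs_lt_dvd hd (by rw [abs_lt]; constructor <;> [push_cast; push_cast] <;> omega)
    exact pinv_inj p hp hx hy (by omega)
  · rintro rfl; simp

lemma parseval (p : ℕ) (hp : p.Prime) (S : Finset ℕ) (hS : S ⊆ Finset.Icc 1 (p - 1)) (γ : ℕ → ℂ) :
    ∑ m ∈ Finset.range p, ‖∑ x ∈ S, γ x * ep p ((m : ℤ) * (pinv p x : ℤ))‖ ^ 2
      = (p : ℝ) * ∑ x ∈ S, ‖γ x‖ ^ 2 := by
  classical
  set T : ℕ → ℂ := fun m => ∑ x ∈ S, γ x * ep p ((m : ℤ) * (pinv p x : ℤ)) with hT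
  have key : ∑ m ∈ Finset.range p, T m * (starRingEnd ℂ) (T m)
      = (p : ℂ) * ∑ x ∈ S, γ x * (starRingEnd ℂ) (γ x) := by
    have step1 : ∀ m ∈ Finset.range p, T m * (starRingEnd ℂ) (T m)
        = ∑ x ∈ S, ∑ y ∈ S, γ x * (starRingEnd ℂ) (γ y) *
            ep p ((m : ℤ) * ((pinv p x : ℤ) - (pinv p y : ℤ))) := by
      intro m _
      rw [hT]
      simp only [map_sum, Finset.sum_mul_sum]
      refine Finset.sum_congr rfl fun x _ => Finset.sum_congr rfl fun y _ => ?_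
      rw [map_mul, ep_conj]
      rw [show (m : ℤ) * ((pinv p x : ℤ) - (pinv p y : ℤ))
          = (m : ℤ) * (pinv p x : ℤ) + -((m : ℤ) * (pinv p y : ℤ)) by ring, ep_add]
      ring
    rw [Finset.sum_congr rfl step1, Finset.sum_comm]
    have step2 : ∀ x ∈ S, ∑ m ∈ Finset.range p, ∑ y ∈ S, γ x * (starRingEnd ℂ) (γ y) *
        ep p ((m : ℤ) * ((pinv p x : ℤ) - (pinv p y : ℤ)))
        = γ x * (starRingEnd ℂ) (γ x) * p := by
      intro x hx
      rw [Finset.sum_comm]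
      have step3 : ∀ y ∈ S, ∑ m ∈ Finset.range p, γ x * (starRingEnd ℂ) (γ y) *
          ep p ((m : ℤ) * ((pinv p x : ℤ) - (pinv p y : ℤ)))
          = γ x * (starRingEnd ℂ) (γ y) * (if x = y then (p : ℂ) else 0) := by
        intro y hy
        rw [← Finset.mul_sum, sum_ep p hp.pos]
        congr 1
        simp only [pinv_dvd_iff p hp (hS hx) (hS hy)]
      rw [Finset.sum_congr rfl step3]
      rw [Finset.sum_congr rfl (fun y _ => by rw [mul_ite, mul_zero])]
      rw [Finset.sum_ite_eq S x (fun y => γ x * (starRingEnd ℂ) (γ y) * p), if_pos hx]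
    rw [Finset.sum_congr rfl step2, ← Finset.sum_mul]
    ring
  have h1 : ∀ m : ℕ, ‖T m‖ ^ 2 = (T m * (starRingEnd ℂ) (T m)).re := by
    intro m
    rw [Complex.mul_conj, Complex.ofReal_re, Complex.normSq_eq_norm_sq]
  have h2 : ∀ x : ℕ, γ x * (starRingEnd ℂ) (γ x) = ((‖γ x‖ ^ 2 : ℝ) : ℂ) := by
    intro x
    rw [Complex.mul_conj, Complex.normSq_eq_norm_sq]
  calc ∑ m ∈ Finset.range p, ‖T m‖ ^ 2
      = (∑ m ∈ Finset.range p, T m * (starRingEnd ℂ) (T m)).re := by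
        rw [Complex.re_sum]; exact Finset.sum_congr rfl fun m _ => h1 m
    _ = ((p : ℂ) * ∑ x ∈ S, γ x * (starRingEnd ℂ) (γ x)).re := by rw [key]
    _ = (p : ℝ) * ∑ x ∈ S, ‖γ x‖ ^ 2 := by
        rw [Finset.sum_congr rfl fun x _ => h2 x, ← Complex.ofReal_sum,
          show ((p : ℂ) = ((p : ℝ) : ℂ)) from by push_cast; rfl, ← Complex.ofReal_mul,
          Complex.ofReal_re]

lemma dp_eq (p x : ℕ) (hx : x < p) : dp p (x : ℤ) = min x (p - x) := by
  rw [dp]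
  have h : ((x : ℤ) % p) = x :=
    Int.emod_eq_of_lt (Int.natCast_nonneg x) (by exact_mod_cast hx)
  rw [h, Int.toNat_natCast]

lemma card_dp_le (p : ℕ) (hp : 0 < p) (b : ℕ) :
    ((Finset.Icc 1 (p - 1)).filter (fun x : ℕ => dp p (x : ℤ) ≤ b)).card ≤ 2 * b := by
  have hsub : (Finset.Icc 1 (p - 1)).filter (fun x : ℕ => dp p (x : ℤ) ≤ b)
      ⊆ Finset.Icc 1 b ∪ Finset.Icc (p - b) (p - 1) := by
    intro x hx
    simp only [Finset.mem_filter, Finset.mem_Icc] at hx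
    obtain ⟨⟨h1, h2⟩, h3⟩ := hx
    rw [dp_eq p x (by omega)] at h3
    simp only [Finset.mem_union, Finset.mem_Icc]
    omega
  calc ((Finset.Icc 1 (p - 1)).filter (fun x : ℕ => dp p (x : ℤ) ≤ b)).card
      ≤ (Finset.Icc 1 b ∪ Finset.Icc (p - b) (p - 1)).card := Finset.card_le_card hsub
    _ ≤ (Finset.Icc 1 b).card + (Finset.Icc (p - b) (p - 1)).card := Finset.card_union_le _ _
    _ ≤ b + b := by
        rw [Nat.card_Icc, Nat.card_Icc]
        omega
    _ = 2 * b := by ring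

open scoped Classical in
theorem weighted_sum_dyadic_dist_bound :
    ∃ C : ℝ, 0 < C ∧
      ∀ p K M N : ℕ, p.Prime → 1 ≤ M → K + M ≤ p - 1 → 1 ≤ N → N < p →
        ∀ i : ℕ, 1 ≤ i → ∀ α γ : ℕ → ℂ,
        (∀ x ∈ Finset.Icc 1 (p - 1), ‖γ x‖ ≤ min (N : ℝ) ((p : ℝ) / (dp p x : ℝ))) →
        ‖∑ m ∈ Finset.Icc (K + 1) (K + M),
            ∑ x ∈ (Finset.Icc 1 (p - 1)).filter
              (fun x : ℕ => Real.exp i * p / N < (dp p x : ℝ) ∧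
                (dp p x : ℝ) ≤ Real.exp (i + 1) * p / N),
              α m * γ x * ep p ((m : ℤ) * pinv p x)‖ ≤
          C * Real.exp (-(i : ℝ) / 2) *
            Real.sqrt (∑ m ∈ Finset.Icc (K + 1) (K + M), ‖α m‖ ^ 2) *
            Real.sqrt N * p := by
  refine ⟨3, by norm_num, ?_⟩
  intro p K M N hp hM hKM hN hNp i hi α γ hγ
  have hp2 := hp.two_le
  have hp0 : (0 : ℝ) < p := by positivity
  have hN0 : (0 : ℝ) < N := by exact_mod_cast hN
  set I := Finset.Icc (K + 1) (K + M) with hI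
  set S := (Finset.Icc 1 (p - 1)).filter
    (fun x : ℕ => Real.exp i * p / N < (dp p x : ℝ) ∧
      (dp p x : ℝ) ≤ Real.exp (i + 1) * p / N) with hSdef
  set T : ℕ → ℂ := fun m => ∑ x ∈ S, γ x * ep p ((m : ℤ) * (pinv p x : ℤ)) with hT
  have hrw : ∀ m ∈ I, ∑ x ∈ S, α m * γ x * ep p ((m : ℤ) * (pinv p x : ℤ)) = α m * T m := by
    intro m _
    rw [hT, Finset.mul_sum]
    exact Finset.sum_congr rfl fun x _ => by ring
  rw [Finset.sum_congr rfl hrw]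
  -- Cauchy-Schwarz
  have hCS : ‖∑ m ∈ I, α m * T m‖ ≤
      Real.sqrt (∑ m ∈ I, ‖α m‖ ^ 2) * Real.sqrt (∑ m ∈ I, ‖T m‖ ^ 2) :=
    calc ‖∑ m ∈ I, α m * T m‖ ≤ ∑ m ∈ I, ‖α m * T m‖ := norm_sum_le _ _
      _ = ∑ m ∈ I, ‖α m‖ * ‖T m‖ := by simp [norm_mul]
      _ ≤ _ := Real.sum_mul_le_sqrt_mul_sqrt _ _ _
  -- bound on ∑ ‖T m‖²
  have hγS : ∀ x ∈ S, ‖γ x‖ ≤ N * Real.exp (-(i : ℝ)) := by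
    intro x hx
    rw [hSdef, Finset.mem_filter] at hx
    obtain ⟨hx1, hx2, hx3⟩ := hx
    have hB : (0 : ℝ) < Real.exp i * p / N := by positivity
    have hdp : (0 : ℝ) < (dp p (x : ℤ) : ℝ) := lt_trans hB hx2
    calc ‖γ x‖ ≤ min (N : ℝ) ((p : ℝ) / (dp p (x : ℤ) : ℝ)) := hγ x hx1
      _ ≤ (p : ℝ) / (dp p (x : ℤ) : ℝ) := min_le_right _ _
      _ ≤ (p : ℝ) / (Real.exp i * p / N) :=
          div_le_div_of_nonneg_left (le_of_lt hp0) hB (le_of_lt hx2)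
      _ = N * Real.exp (-(i : ℝ)) := by
          rw [Real.exp_neg]
          field_simp
  have hcardS : (S.card : ℝ) ≤ 2 * (Real.exp (i + 1) * p / N) := by
    set b : ℕ := ⌊Real.exp (i + 1) * p / N⌋₊ with hb
    have hsub : S ⊆ (Finset.Icc 1 (p - 1)).filter (fun x : ℕ => dp p (x : ℤ) ≤ b) := by
      intro x hx
      rw [hSdef, Finset.mem_filter] at hx
      rw [Finset.mem_filter]
      exact ⟨hx.1, Nat.le_floor hx.2.2⟩
    have h1 : S.card ≤ 2 * b := le_trans (Finset.card_le_card hsub) (card_dp_le p hp.pos b)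
    calc (S.card : ℝ) ≤ (2 * b : ℕ) := by exact_mod_cast h1
      _ = 2 * (b : ℝ) := by push_cast; ring
      _ ≤ 2 * (Real.exp (i + 1) * p / N) := by
          have := Nat.floor_le (a := Real.exp (i + 1) * p / N) (by positivity)
          linarith
  have hTsum : ∑ m ∈ I, ‖T m‖ ^ 2 ≤ 9 * Real.exp (-(i : ℝ)) * N * p ^ 2 := by
    have hsub : I ⊆ Finset.range p := by
      intro m hm
      rw [hI, Finset.mem_Icc] at hm
      rw [Finset.mem_range]
      omega
    have h1 : ∑ m ∈ I, ‖T m‖ ^ 2 ≤ ∑ m ∈ Finset.range p, ‖T m‖ ^ 2 :=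
      Finset.sum_le_sum_of_subset_of_nonneg hsub fun _ _ _ => by positivity
    rw [hT, parseval p hp S (Finset.filter_subset _ _) γ] at h1
    have h2 : ∑ x ∈ S, ‖γ x‖ ^ 2 ≤ S.card * (N * Real.exp (-(i : ℝ))) ^ 2 := by
      have := Finset.sum_le_card_nsmul S (fun x => ‖γ x‖ ^ 2) ((N * Real.exp (-(i : ℝ))) ^ 2)
        (fun x hx => pow_le_pow_left₀ (norm_nonneg _) (hγS x hx) 2)
      simpa [nsmul_eq_mul] using this
    have h5 : (S.card : ℝ) * (N * Real.exp (-(i : ℝ))) ^ 2 ≤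
        2 * (Real.exp (i + 1) * p / N) * (N * Real.exp (-(i : ℝ))) ^ 2 := by
      have h6 : (0 : ℝ) ≤ (N * Real.exp (-(i : ℝ))) ^ 2 := by positivity
      exact mul_le_mul_of_nonneg_right hcardS h6
    have h7 : 2 * (Real.exp (i + 1) * p / N) * (N * Real.exp (-(i : ℝ))) ^ 2 =
        2 * Real.exp 1 * Real.exp (-(i : ℝ)) * N * p := by
      have e1 : Real.exp ((i : ℝ) + 1) = Real.exp (i : ℝ) * Real.exp 1 := Real.exp_add _ _
      have e2 : Real.exp (-(i : ℝ)) = (Real.exp (i : ℝ))⁻¹ := Real.exp_neg _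
      have hE : Real.exp (i : ℝ) ≠ 0 := (Real.exp_pos _).ne'
      rw [e1, e2]
      field_simp
    have he : Real.exp 1 < 2.7182818286 := Real.exp_one_lt_d9
    have h8 : (p : ℝ) * (2 * Real.exp 1 * Real.exp (-(i : ℝ)) * N * p) ≤
        9 * Real.exp (-(i : ℝ)) * N * p ^ 2 := by
      have h9 : 2 * Real.exp 1 ≤ 9 := by linarith
      have h10 : (0 : ℝ) ≤ Real.exp (-(i : ℝ)) * N * p ^ 2 := by positivity
      calc (p : ℝ) * (2 * Real.exp 1 * Real.exp (-(i : ℝ)) * N * p)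
          = (2 * Real.exp 1) * (Real.exp (-(i : ℝ)) * N * p ^ 2) := by ring
        _ ≤ 9 * (Real.exp (-(i : ℝ)) * N * p ^ 2) := mul_le_mul_of_nonneg_right h9 h10
        _ = 9 * Real.exp (-(i : ℝ)) * N * p ^ 2 := by ring
    calc ∑ m ∈ I, ‖T m‖ ^ 2 ≤ (p : ℝ) * ∑ x ∈ S, ‖γ x‖ ^ 2 := h1
      _ ≤ (p : ℝ) * (S.card * (N * Real.exp (-(i : ℝ))) ^ 2) :=
          mul_le_mul_of_nonneg_left h2 (le_of_lt hp0)
      _ ≤ (p : ℝ) * (2 * (Real.exp (i + 1) * p / N) * (N * Real.exp (-(i : ℝ))) ^ 2) :=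
          mul_le_mul_of_nonneg_left h5 (le_of_lt hp0)
      _ = (p : ℝ) * (2 * Real.exp 1 * Real.exp (-(i : ℝ)) * N * p) := by rw [h7]
      _ ≤ 9 * Real.exp (-(i : ℝ)) * N * p ^ 2 := h8
  -- take square roots
  have hRHS0 : (0 : ℝ) ≤ 3 * Real.exp (-(i : ℝ) / 2) * Real.sqrt N * p := by positivity
  have hsq : Real.sqrt (∑ m ∈ I, ‖T m‖ ^ 2) ≤ 3 * Real.exp (-(i : ℝ) / 2) * Real.sqrt N * p := by
    have heq : (3 * Real.exp (-(i : ℝ) / 2) * Real.sqrt N * p) ^ 2 =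
        9 * Real.exp (-(i : ℝ)) * N * p ^ 2 := by
      rw [mul_pow, mul_pow, mul_pow, Real.sq_sqrt (le_of_lt hN0),
        show Real.exp (-(i : ℝ) / 2) ^ 2 = Real.exp (-(i : ℝ)) by
          rw [sq, ← Real.exp_add]; ring_nf]
      norm_num
    calc Real.sqrt (∑ m ∈ I, ‖T m‖ ^ 2)
        ≤ Real.sqrt ((3 * Real.exp (-(i : ℝ) / 2) * Real.sqrt N * p) ^ 2) :=
          Real.sqrt_le_sqrt (by rw [heq]; exact hTsum)
      _ = 3 * Real.exp (-(i : ℝ) / 2) * Real.sqrt N * p := Real.sqrt_sq hRHS0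
  calc ‖∑ m ∈ I, α m * T m‖
      ≤ Real.sqrt (∑ m ∈ I, ‖α m‖ ^ 2) * Real.sqrt (∑ m ∈ I, ‖T m‖ ^ 2) := hCS
    _ ≤ Real.sqrt (∑ m ∈ I, ‖α m‖ ^ 2) * (3 * Real.exp (-(i : ℝ) / 2) * Real.sqrt N * p) :=
        mul_le_mul_of_nonneg_left hsq (Real.sqrt_nonneg _)
    _ = 3 * Real.exp (-(i : ℝ) / 2) * Real.sqrt (∑ m ∈ I, ‖α m‖ ^ 2) * Real.sqrt N * p := by
        ring
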